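/- arXiv:2111.13839 — 2 statements merged into one kernel-verified Lean document; each statement's English description precedes it below -/
import Mathlib

section
/- Two-domain adaptation bound. Let μ and ν be probability measures on X. Then for every h, h⋆ ∈ H: ε_ν(h) ≤ ε_ν(h⋆) + ε_μ(h⋆) + ε_μ(h) + d_H(μ, ν). -/
open MeasureTheory

/-- The 0-1 risk of a hypothesis `h` under distribution `μ` w.r.t. labeling `f`. -/
noncomputable def risk {X : Type*} [MeasurableSpace X]
    (μ : Measure X) (f h : X → Bool) : ℝ :=
  (μ {x | h x ≠ f x}).toReal

/-- The H-divergence of two measures with respect to a hypothesis class `H`. -/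
noncomputable def dH {X : Type*} [MeasurableSpace X]
    (H : Set (X → Bool)) (μ ν : Measure X) : ℝ :=
  sSup {d : ℝ | ∃ h ∈ H, ∃ h' ∈ H,
    d = |(μ {x | h x ≠ h' x}).toReal - (ν {x | h x ≠ h' x}).toReal|}

/-- Two-domain adaptation bound. -/
theorem two_domain_adaptation_bound
    {X : Type*} [MeasurableSpace X]
    (μ ν : Measure X) [IsProbabilityMeasure μ] [IsProbabilityMeasure ν]
    (f : X → Bool) (hf : Measurable f)
    (H : Set (X → Bool)) (hH : H.Nonempty) (hHmeas : ∀ h ∈ H, Measurable h)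
    (h hstar : X → Bool) (hhH : h ∈ H) (hhstarH : hstar ∈ H) :
    risk ν f h ≤ risk ν f hstar + risk μ f hstar + risk μ f h + dH H μ ν := by
  have key : ∀ (κ : Measure X) [IsProbabilityMeasure κ] (g g' : X → Bool),
      (κ {x | g x ≠ g' x}).toReal ≤ risk κ f g + risk κ f g' := by
    intro κ _ g g'
    have hsub : {x | g x ≠ g' x} ⊆ {x | g x ≠ f x} ∪ {x | g' x ≠ f x} := by
      intro x hx
      by_cases h1 : g x = f x
      · right; simp only [Set.mem_setOf_eq]
        intro h2; exact hx (h1.trans h2.symm)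
      · left; exact h1
    have h1 : κ {x | g x ≠ g' x} ≤ κ {x | g x ≠ f x} + κ {x | g' x ≠ f x} :=
      (measure_mono hsub).trans (measure_union_le _ _)
    have hfin1 : κ {x | g x ≠ f x} ≠ ⊤ := measure_ne_top _ _
    have hfin2 : κ {x | g' x ≠ f x} ≠ ⊤ := measure_ne_top _ _
    calc (κ {x | g x ≠ g' x}).toReal
        ≤ (κ {x | g x ≠ f x} + κ {x | g' x ≠ f x}).toReal :=
          ENNReal.toReal_mono (by finiteness) h1
      _ = risk κ f g + risk κ f g' := ENNReal.toReal_add hfin1 hfin2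
  -- bound ν D - μ D by dH
  set D : Set X := {x | h x ≠ hstar x} with hD
  have hmem : |(μ D).toReal - (ν D).toReal| ∈
      {d : ℝ | ∃ h₁ ∈ H, ∃ h' ∈ H,
        d = |(μ {x | h₁ x ≠ h' x}).toReal - (ν {x | h₁ x ≠ h' x}).toReal|} :=
    ⟨h, hhH, hstar, hhstarH, rfl⟩
  have hbdd : BddAbove {d : ℝ | ∃ h₁ ∈ H, ∃ h' ∈ H,
      d = |(μ {x | h₁ x ≠ h' x}).toReal - (ν {x | h₁ x ≠ h' x}).toReal|} := by
    refine ⟨1, ?_⟩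
    rintro d ⟨g, -, g', -, rfl⟩
    have hμ : (μ {x | g x ≠ g' x}).toReal ≤ 1 := by
      have := prob_le_one (μ := μ) (s := {x | g x ≠ g' x})
      simpa using ENNReal.toReal_mono (by simp) this
    have hν : (ν {x | g x ≠ g' x}).toReal ≤ 1 := by
      have := prob_le_one (μ := ν) (s := {x | g x ≠ g' x})
      simpa using ENNReal.toReal_mono (by simp) this
    have h0μ : (0:ℝ) ≤ (μ {x | g x ≠ g' x}).toReal := ENNReal.toReal_nonneg
    have h0ν : (0:ℝ) ≤ (ν {x | g x ≠ g' x}).toReal := ENNReal.toReal_nonneg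
    rw [abs_le]; constructor <;> linarith
  have hdH : (ν D).toReal - (μ D).toReal ≤ dH H μ ν := by
    have h1 : (ν D).toReal - (μ D).toReal ≤ |(μ D).toReal - (ν D).toReal| := by
      rw [abs_sub_comm]; exact le_abs_self _
    exact h1.trans (le_csSup hbdd hmem)
  -- triangle: risk ν f h ≤ risk ν f hstar + ν D
  have htri : risk ν f h ≤ risk ν f hstar + (ν D).toReal := by
    have hsub : {x | h x ≠ f x} ⊆ {x | hstar x ≠ f x} ∪ D := by
      intro x hx
      by_cases h1 : hstar x = f x
      · right; simp only [hD, Set.mem_setOf_eq]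
        intro h2; exact hx (h2.trans h1)
      · left; exact h1
    have h1 : ν {x | h x ≠ f x} ≤ ν {x | hstar x ≠ f x} + ν D :=
      (measure_mono hsub).trans (measure_union_le _ _)
    calc risk ν f h
        ≤ (ν {x | hstar x ≠ f x} + ν D).toReal := ENNReal.toReal_mono (by finiteness) h1
      _ = risk ν f hstar + (ν D).toReal :=
          ENNReal.toReal_add (measure_ne_top _ _) (measure_ne_top _ _)
  have hmid : (μ D).toReal ≤ risk μ f hstar + risk μ f h := by
    have := key μ hstar h
    simpa [hD, ne_comm, add_comm] using (key μ h hstar)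
  linarith
end

section
/- Domain generalization bound via a fictitious distribution (Eq. (14) of the paper). Let ν (the unseen target), ρ (the fictitious distribution), and μ₁, …, μ_N (the source domains) be probability measures on X, and let α ∈ ℝ^N with α_i ≥ 0 and Σ_i α_i = 1; write μ_α = Σ_i α_i μ_i for the mixture source distribution. Then for every h, h⋆ ∈ H: ε_ν(h) ≤ (ε_ν(h⋆) + Σ_i α_i ε_{μ_i}(h⋆)) + Σ_i α_i ε_{μ_i}(h) + d_H(ρ, μ_α) + d_H(ν, ρ). (Taking h⋆ to be the joint-risk-optimal hypothesis, the first parenthesized term is the ideal joint risk λ_α; the remaining terms are the empirical source risk, the divergence between the fictitious distribution and the source mixture, and the diversity term d_H(ν, ρ).) -/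
open MeasureTheory

lemma measure_toReal_le_one {X : Type*} [MeasurableSpace X]
    (μ : Measure X) [IsProbabilityMeasure μ] (s : Set X) : (μ s).toReal ≤ 1 := by
  have := prob_le_one (μ := μ) (s := s)
  calc (μ s).toReal ≤ (1 : ENNReal).toReal := ENNReal.toReal_mono (by simp) this
    _ = 1 := by simp

lemma triangle_risk {X : Type*} [MeasurableSpace X]
    (μ : Measure X) [IsProbabilityMeasure μ] (f h h' : X → Bool) :
    (μ {x | h x ≠ h' x}).toReal ≤ risk μ f h + risk μ f h' := by
  have hsub : {x | h x ≠ h' x} ⊆ {x | h x ≠ f x} ∪ {x | h' x ≠ f x} := by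
    intro x hx
    by_contra hc
    simp only [Set.mem_union, Set.mem_setOf_eq, not_or, not_not] at hc
    exact hx (hc.1.trans hc.2.symm)
  have h1 : μ {x | h x ≠ h' x} ≤ μ {x | h x ≠ f x} + μ {x | h' x ≠ f x} :=
    le_trans (measure_mono hsub) (measure_union_le _ _)
  have hfin : μ {x | h x ≠ f x} + μ {x | h' x ≠ f x} ≠ ⊤ :=
    ENNReal.add_ne_top.mpr ⟨measure_ne_top _ _, measure_ne_top _ _⟩
  have := ENNReal.toReal_mono hfin h1
  rwa [ENNReal.toReal_add (measure_ne_top _ _) (measure_ne_top _ _)] at this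

lemma dH_ge {X : Type*} [MeasurableSpace X]
    (H : Set (X → Bool)) (μ ν : Measure X)
    [IsProbabilityMeasure μ] [IsProbabilityMeasure ν]
    {h h' : X → Bool} (hh : h ∈ H) (hh' : h' ∈ H) :
    (μ {x | h x ≠ h' x}).toReal - (ν {x | h x ≠ h' x}).toReal ≤ dH H μ ν := by
  refine le_trans (le_abs_self _) (le_csSup ?_ ⟨h, hh, h', hh', rfl⟩)
  refine ⟨1, ?_⟩
  rintro d ⟨g, -, g', -, rfl⟩
  rw [abs_sub_le_iff]
  constructor <;>
  · have := measure_toReal_le_one μ {x | g x ≠ g' x}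
    have := measure_toReal_le_one ν {x | g x ≠ g' x}
    have := ENNReal.toReal_nonneg (a := μ {x | g x ≠ g' x})
    have := ENNReal.toReal_nonneg (a := ν {x | g x ≠ g' x})
    linarith

lemma mix_apply {X : Type*} [MeasurableSpace X]
    (N : ℕ) (μ : Fin N → Measure X) (α : Fin N → ℝ) (hα : ∀ i, 0 ≤ α i)
    [∀ i, IsProbabilityMeasure (μ i)] (s : Set X) :
    ((∑ i, ENNReal.ofReal (α i) • μ i) s).toReal = ∑ i, α i * (μ i s).toReal := by
  rw [Measure.coe_finset_sum, Finset.sum_apply, ENNReal.toReal_sum]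
  · refine Finset.sum_congr rfl fun i _ => ?_
    simp [ENNReal.toReal_mul, ENNReal.toReal_ofReal (hα i)]
  · intro i _
    simp only [Measure.smul_apply, smul_eq_mul]
    exact ENNReal.mul_ne_top ENNReal.ofReal_ne_top (measure_ne_top _ _)

/-- Domain generalization bound via a fictitious distribution (Eq. (14) of the paper). -/
theorem domain_generalization_fictitious_bound
    {X : Type*} [MeasurableSpace X]
    (f : X → Bool) (hf : Measurable f)
    (H : Set (X → Bool)) (hH : H.Nonempty) (hHmeas : ∀ h ∈ H, Measurable h)
    (ν ρ : Measure X) [IsProbabilityMeasure ν] [IsProbabilityMeasure ρ]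
    (N : ℕ) (μ : Fin N → Measure X) [∀ i, IsProbabilityMeasure (μ i)]
    (α : Fin N → ℝ) (hα : ∀ i, 0 ≤ α i) (hαsum : ∑ i, α i = 1)
    (h hstar : X → Bool) (hhH : h ∈ H) (hhstarH : hstar ∈ H) :
    risk ν f h ≤
      (risk ν f hstar + ∑ i, α i * risk (μ i) f hstar)
        + ∑ i, α i * risk (μ i) f h
        + dH H ρ (∑ i, ENNReal.ofReal (α i) • μ i)
        + dH H ν ρ := by
  set m : Measure X := ∑ i, ENNReal.ofReal (α i) • μ i with hm
  have hmprob : IsProbabilityMeasure m := by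
    constructor
    have h1 : (m Set.univ).toReal = 1 := by
      rw [hm, mix_apply N μ α hα]
      simp [hαsum]
    have hfin : m Set.univ ≠ ⊤ := by
      rw [hm, Measure.coe_finset_sum, Finset.sum_apply]
      exact (ENNReal.sum_lt_top.mpr fun i _ => by
        simp only [Measure.smul_apply, smul_eq_mul]
        exact ENNReal.mul_lt_top ENNReal.ofReal_lt_top (measure_lt_top _ _)).ne
    rw [← ENNReal.ofReal_toReal hfin, h1]; simp
  set s : Set X := {x | h x ≠ hstar x} with hs
  -- Step 1: risk ν f h ≤ risk ν f hstar + ν s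
  have step1 : risk ν f h ≤ risk ν f hstar + (ν s).toReal := by
    have hsub : {x | h x ≠ f x} ⊆ {x | hstar x ≠ f x} ∪ s := by
      intro x hx
      by_contra hc
      simp only [Set.mem_union, Set.mem_setOf_eq, not_or, not_not, hs] at hc
      exact hx (hc.2.trans hc.1)
    have h1 : ν {x | h x ≠ f x} ≤ ν {x | hstar x ≠ f x} + ν s :=
      le_trans (measure_mono hsub) (measure_union_le _ _)
    have hfin : ν {x | hstar x ≠ f x} + ν s ≠ ⊤ :=
      ENNReal.add_ne_top.mpr ⟨measure_ne_top _ _, measure_ne_top _ _⟩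
    have := ENNReal.toReal_mono hfin h1
    rwa [ENNReal.toReal_add (measure_ne_top _ _) (measure_ne_top _ _)] at this
  -- Step 2: ν s ≤ ρ s + dH H ν ρ
  have step2 : (ν s).toReal ≤ (ρ s).toReal + dH H ν ρ := by
    have := dH_ge H ν ρ hhH hhstarH
    linarith
  -- Step 3: ρ s ≤ m s + dH H ρ m
  have step3 : (ρ s).toReal ≤ (m s).toReal + dH H ρ m := by
    have := dH_ge H ρ m hhH hhstarH
    linarith
  -- Step 4: m s ≤ ∑ α i * (risk (μ i) f h + risk (μ i) f hstar)
  have step4 : (m s).toReal ≤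
      ∑ i, α i * risk (μ i) f h + ∑ i, α i * risk (μ i) f hstar := by
    rw [hm, mix_apply N μ α hα, ← Finset.sum_add_distrib]
    refine Finset.sum_le_sum fun i _ => ?_
    rw [← mul_add]
    exact mul_le_mul_of_nonneg_left (triangle_risk (μ i) f h hstar) (hα i)
  linarith
end
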